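/- Let F be a field and let A and B be finite sets (possibly overlapping). For subspaces V_A ⊆ F_A and V_B ⊆ F_B, taking the extended sum and extended intersection in F_{A∪B} and orthogonal complements with respect to the dot product on the relevant ground set, one has (V_A + V_B)^⊥ = V_A^⊥ ∩ V_B^⊥ and (V_A ∩ V_B)^⊥ = V_A^⊥ + V_B^⊥ (on the left-hand sides the orthogonal complement is taken in F_{A∪B}, on the right-hand sides V_A^⊥ ⊆ F_A and V_B^⊥ ⊆ F_B). -/

import Mathlib

noncomputable section

open scoped BigOperators

/-- Dot product of two vectors indexed by a finite type. -/
def dotProd {F α : Type*} [Field F] [Fintype α] (f g : α → F) : F :=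
  ∑ x, f x * g x

/-- Orthogonal complement of `K` taken within `F_X`, the space of vectors supported on `X`. -/
def perpOn {F α : Type*} [Field F] [Fintype α] (X : Set α) (K : Set (α → F)) :
    Set (α → F) :=
  {g | (∀ x ∉ X, g x = 0) ∧ ∀ f ∈ K, dotProd f g = 0}

/-- Extended sum of two collections of vectors (vectors encoded with zero extension). -/
def extSum {F α : Type*} [Field F] (K₁ K₂ : Set (α → F)) : Set (α → F) :=
  {h | ∃ f ∈ K₁, ∃ g ∈ K₂, h = f + g}

/-- Extended intersection of `K₁ ⊆ F_A` and `K₂ ⊆ F_B`, taken inside `F_{A∪B}`. -/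
def extInter {F α : Type*} [Field F] (A B : Set α) (K₁ K₂ : Set (α → F)) :
    Set (α → F) :=
  {h | (∀ x ∉ A ∪ B, h x = 0) ∧ A.indicator h ∈ K₁ ∧ B.indicator h ∈ K₂}

namespace Stmt0Aux

variable {F α : Type*} [Field F] [Fintype α]

lemma dotProd_comm (f g : α → F) : dotProd f g = dotProd g f :=
  Finset.sum_congr rfl fun x _ => mul_comm _ _

lemma dotProd_add_left (f g h : α → F) :
    dotProd (f + g) h = dotProd f h + dotProd g h := by
  simp [dotProd, add_mul, Finset.sum_add_distrib]

lemma dotProd_add_right (f g h : α → F) :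
    dotProd f (g + h) = dotProd f g + dotProd f h := by
  simp [dotProd, mul_add, Finset.sum_add_distrib]

lemma dotProd_smul_right (c : F) (f g : α → F) :
    dotProd f (c • g) = c * dotProd f g := by
  simp only [dotProd, Finset.mul_sum, Pi.smul_apply, smul_eq_mul]
  exact Finset.sum_congr rfl fun x _ => by ring

/-- If `h` is supported on `A`, applying the indicator to the other argument changes nothing. -/
lemma dotProd_indicator_left (A : Set α) (g h : α → F) (hh : ∀ x ∉ A, h x = 0) :
    dotProd (A.indicator g) h = dotProd g h := by
  refine Finset.sum_congr rfl fun x _ => ?_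
  by_cases hx : x ∈ A
  · rw [Set.indicator_of_mem hx]
  · rw [Set.indicator_of_notMem hx, hh x hx, mul_zero, mul_zero]

lemma dotProd_indicator_right (A : Set α) (f h : α → F) (hf : ∀ x ∉ A, f x = 0) :
    dotProd f (A.indicator h) = dotProd f h := by
  rw [dotProd_comm, dotProd_indicator_left A h f hf, dotProd_comm]

/-- The dot product as a bilinear form. -/
def dotB : LinearMap.BilinForm F (α → F) :=
  LinearMap.mk₂ F (fun f g => ∑ x, f x * g x)
    (fun f f' g => by simp [add_mul, Finset.sum_add_distrib])
    (fun c f g => by simp [Finset.mul_sum, mul_assoc])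
    (fun f g g' => by simp [mul_add, Finset.sum_add_distrib])
    (fun c f g => by simp [Finset.mul_sum]; exact Finset.sum_congr rfl fun x _ => by ring)

lemma dotB_apply (f g : α → F) : dotB f g = dotProd f g := rfl

lemma dotB_nondegenerate : (dotB : LinearMap.BilinForm F (α → F)).Nondegenerate := by
  classical
  refine ⟨fun f hf => ?_, fun f hf => ?_⟩ <;> funext x <;> have := hf (Pi.single x 1) <;>
    simpa [dotB, Pi.single_apply, Finset.sum_ite_eq', Finset.sum_ite_eq, mul_comm] using this

lemma dotB_refl : (dotB : LinearMap.BilinForm F (α → F)).IsRefl := by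
  intro f g h
  rw [dotB_apply, dotProd_comm, ← dotB_apply, h]

/-- `perpOn` as a submodule. -/
def perpSub (A : Set α) (V : Submodule F (α → F)) : Submodule F (α → F) where
  carrier := perpOn A (V : Set (α → F))
  add_mem' := by
    rintro a b ⟨ha1, ha2⟩ ⟨hb1, hb2⟩
    refine ⟨fun x hx => by simp [ha1 x hx, hb1 x hx], fun f hf => ?_⟩
    rw [dotProd_add_right, ha2 f hf, hb2 f hf, add_zero]
  zero_mem' := by
    refine ⟨fun x _ => rfl, fun f _ => ?_⟩
    simp [dotProd]
  smul_mem' := by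
    rintro c a ⟨ha1, ha2⟩
    refine ⟨fun x hx => by simp [ha1 x hx], fun f hf => ?_⟩
    rw [dotProd_smul_right, ha2 f hf, mul_zero]

lemma coe_perpSub (A : Set α) (V : Submodule F (α → F)) :
    (perpSub A V : Set (α → F)) = perpOn A (V : Set (α → F)) := rfl

/-- The double perp theorem within `F_A`. -/
lemma doublePerp (A : Set α) (V : Submodule F (α → F))
    (hV : ∀ f ∈ V, ∀ x ∉ A, f x = 0) :
    perpOn A (perpOn A (V : Set (α → F))) = (V : Set (α → F)) := by
  ext h
  constructor
  · rintro ⟨hsupp, hdot⟩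
    have key : h ∈ dotB.orthogonal (dotB.orthogonal V) := by
      rw [LinearMap.BilinForm.mem_orthogonal_iff]
      intro g hg
      rw [dotB_apply]
      have hgA : A.indicator g ∈ perpOn A (V : Set (α → F)) := by
        refine ⟨fun x hx => Set.indicator_of_notMem hx g, fun f hf => ?_⟩
        rw [dotProd_indicator_right A f g (hV f hf)]
        have := (LinearMap.BilinForm.mem_orthogonal_iff.mp hg) f hf
        rwa [dotB_apply] at this
      have := hdot _ hgA
      rwa [dotProd_indicator_left A g h hsupp] at this
    rwa [LinearMap.BilinForm.orthogonal_orthogonal dotB_nondegenerate dotB_refl] at key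
  · intro hh
    refine ⟨hV h hh, fun g hg => ?_⟩
    rw [dotProd_comm]
    exact hg.2 h hh

/-- Part 1: perp of extended sum is extended intersection of perps. -/
lemma perp_extSum (A B : Set α) (VA VB : Submodule F (α → F))
    (hA : ∀ f ∈ VA, ∀ x ∉ A, f x = 0)
    (hB : ∀ g ∈ VB, ∀ x ∉ B, g x = 0) :
    perpOn (A ∪ B) (extSum (VA : Set (α → F)) (VB : Set (α → F)))
      = extInter A B (perpOn A (VA : Set (α → F))) (perpOn B (VB : Set (α → F))) := by
  ext h
  constructor
  · rintro ⟨hsupp, hdot⟩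
    refine ⟨hsupp, ⟨fun x hx => Set.indicator_of_notMem hx h, fun f hf => ?_⟩,
      ⟨fun x hx => Set.indicator_of_notMem hx h, fun g hg => ?_⟩⟩
    · rw [dotProd_indicator_right A f h (hA f hf)]
      have := hdot f ⟨f, hf, 0, VB.zero_mem, (add_zero f).symm⟩
      exact this
    · rw [dotProd_indicator_right B g h (hB g hg)]
      exact hdot g ⟨0, VA.zero_mem, g, hg, (zero_add g).symm⟩
  · rintro ⟨hsupp, hia, hib⟩
    refine ⟨hsupp, ?_⟩
    rintro f ⟨fa, hfa, fb, hfb, rfl⟩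
    rw [dotProd_add_left]
    have h1 : dotProd fa h = 0 := by
      rw [← dotProd_indicator_right A fa h (hA fa hfa)]
      exact hia.2 fa hfa
    have h2 : dotProd fb h = 0 := by
      rw [← dotProd_indicator_right B fb h (hB fb hfb)]
      exact hib.2 fb hfb
    rw [h1, h2, add_zero]

lemma extSum_perp_eq_sup (A B : Set α) (VA VB : Submodule F (α → F)) :
    extSum (perpOn A (VA : Set (α → F))) (perpOn B (VB : Set (α → F)))
      = ((perpSub A VA ⊔ perpSub B VB : Submodule F (α → F)) : Set (α → F)) := by
  ext h
  simp only [extSum, Set.mem_setOf_eq, SetLike.mem_coe, Submodule.mem_sup]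
  constructor
  · rintro ⟨f, hf, g, hg, rfl⟩; exact ⟨f, hf, g, hg, rfl⟩
  · rintro ⟨f, hf, g, hg, rfl⟩; exact ⟨f, hf, g, hg, rfl⟩

end Stmt0Aux

open Stmt0Aux in
/-- `(V_A + V_B)^⊥ = V_A^⊥ ∩ V_B^⊥` and `(V_A ∩ V_B)^⊥ = V_A^⊥ + V_B^⊥`,
with perps on the left in `F_{A∪B}` and on the right in `F_A`, `F_B`. -/
theorem stmt0 {F α : Type*} [Field F] [Fintype α] (A B : Set α)
    (VA VB : Submodule F (α → F))
    (hA : ∀ f ∈ VA, ∀ x ∉ A, f x = 0)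
    (hB : ∀ g ∈ VB, ∀ x ∉ B, g x = 0) :
    perpOn (A ∪ B) (extSum (VA : Set (α → F)) (VB : Set (α → F)))
        = extInter A B (perpOn A (VA : Set (α → F))) (perpOn B (VB : Set (α → F)))
    ∧ perpOn (A ∪ B) (extInter A B (VA : Set (α → F)) (VB : Set (α → F)))
        = extSum (perpOn A (VA : Set (α → F))) (perpOn B (VB : Set (α → F))) := by
  refine ⟨perp_extSum A B VA VB hA hB, ?_⟩
  -- support conditions for the perp submodules
  have hPA : ∀ f ∈ perpSub A VA, ∀ x ∉ A, f x = 0 := fun f hf => hf.1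
  have hPB : ∀ g ∈ perpSub B VB, ∀ x ∉ B, g x = 0 := fun g hg => hg.1
  have hsup : ∀ h ∈ (perpSub A VA ⊔ perpSub B VB : Submodule F (α → F)),
      ∀ x ∉ A ∪ B, h x = 0 := by
    intro h hh x hx
    obtain ⟨f, hf, g, hg, rfl⟩ := Submodule.mem_sup.mp hh
    have hxA : x ∉ A := fun hxa => hx (Or.inl hxa)
    have hxB : x ∉ B := fun hxb => hx (Or.inr hxb)
    simp [hf.1 x hxA, hg.1 x hxB]
  -- extInter VA VB is the perp of the sup of the perps
  have key : extInter A B (VA : Set (α → F)) (VB : Set (α → F))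
      = perpOn (A ∪ B)
          ((perpSub A VA ⊔ perpSub B VB : Submodule F (α → F)) : Set (α → F)) := by
    have := perp_extSum A B (perpSub A VA) (perpSub B VB) hPA hPB
    rw [coe_perpSub, coe_perpSub, doublePerp A VA hA, doublePerp B VB hB] at this
    rw [← this, ← extSum_perp_eq_sup]
  rw [key, doublePerp (A ∪ B) _ hsup, ← extSum_perp_eq_sup]
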